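/- arXiv:1511.01806 — 6 statements merged into one kernel-verified Lean document; each statement's English description precedes it below -/
import Mathlib

section
/- The class of AT-free graphs is closed under edge contractions: if G is a simple graph containing no asteroidal triple, and H is obtained from G by contracting an edge {x,y} (replacing x and y by a single new vertex whose neighborhood is (N(x) ∪ N(y)) \ {x,y}), then H contains no asteroidal triple. -/
open SimpleGraph

/-- The closed neighborhood of a vertex. -/
def closedNbh {V : Type*} (G : SimpleGraph V) (v : V) : Set V :=
  insert v (G.neighborSet v)

/-- `u` and `w` are joined by a walk all of whose vertices avoid the set `A`. -/
def reachAvoid {V : Type*} (G : SimpleGraph V) (A : Set V) (u w : V) : Prop :=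
  ∃ p : G.Walk u w, ∀ x ∈ p.support, x ∉ A

/-- `{p, q, r}` is an asteroidal triple: three pairwise nonadjacent (distinct) vertices
such that every two of them are joined by a path avoiding the closed neighborhood
of the third. -/
def IsAT {V : Type*} (G : SimpleGraph V) (p q r : V) : Prop :=
  p ≠ q ∧ p ≠ r ∧ q ≠ r ∧ ¬ G.Adj p q ∧ ¬ G.Adj p r ∧ ¬ G.Adj q r ∧
  reachAvoid G (closedNbh G r) p q ∧ reachAvoid G (closedNbh G q) p r ∧
  reachAvoid G (closedNbh G p) q r

/-- `C` is a block at `v`: a connected component of `G − N[v]`. -/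
def IsBlockAt {V : Type*} (G : SimpleGraph V) (v : V) (C : Set V) : Prop :=
  C.Nonempty ∧ C ⊆ (closedNbh G v)ᶜ ∧ (G.induce C).Connected ∧
  ∀ u ∉ C, u ∉ closedNbh G v → ∀ c ∈ C, ¬ G.Adj u c

/-- `z` is between the nonadjacent vertices `x` and `y`: `z` and `x` lie in a common
component of `G − N[y]`, and `z` and `y` lie in a common component of `G − N[x]`. -/
def Between {V : Type*} (G : SimpleGraph V) (x y z : V) : Prop :=
  reachAvoid G (closedNbh G y) x z ∧ reachAvoid G (closedNbh G x) y z

/-- The interval between `x` and `y`: all vertices between `x` and `y`. -/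
def interval {V : Type*} (G : SimpleGraph V) (x y : V) : Set V :=
  {z | Between G x y z}

/-- The contraction of the edge `{x, y}` of `G`: the vertices `x` and `y` are
replaced by a single new vertex `none`, whose neighborhood is
`(N(x) ∪ N(y)) \ {x, y}`. -/
def contractEdge {V : Type*} (G : SimpleGraph V) (x y : V) :
    SimpleGraph (Option {v : V // v ≠ x ∧ v ≠ y}) where
  Adj a b :=
    match a, b with
    | some u, some w => G.Adj u.1 w.1
    | some u, none => G.Adj u.1 x ∨ G.Adj u.1 y
    | none, some w => G.Adj w.1 x ∨ G.Adj w.1 y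
    | none, none => False
  symm := by
    refine ⟨?_⟩
    rintro (_ | a) (_ | b) h <;> simp_all [SimpleGraph.adj_comm]
  loopless := by
    refine ⟨?_⟩
    rintro (_ | a) h <;> simp_all

-- aux
lemma reachAvoid_refl {V : Type*} {G : SimpleGraph V} {A : Set V} {u : V} (h : u ∉ A) :
    reachAvoid G A u u := ⟨Walk.nil, by simpa⟩

lemma reachAvoid_adj {V : Type*} {G : SimpleGraph V} {A : Set V} {u w : V}
    (h : G.Adj u w) (hu : u ∉ A) (hw : w ∉ A) : reachAvoid G A u w :=
  ⟨Walk.cons h Walk.nil, by simp_all⟩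

lemma reachAvoid_trans {V : Type*} {G : SimpleGraph V} {A : Set V} {u v w : V}
    (h1 : reachAvoid G A u v) (h2 : reachAvoid G A v w) : reachAvoid G A u w := by
  obtain ⟨p, hp⟩ := h1; obtain ⟨q, hq⟩ := h2
  refine ⟨p.append q, fun z hz => ?_⟩
  rcases (Walk.mem_support_append_iff _ _).1 hz with h | h
  · exact hp z h
  · exact hq z h

lemma reachAvoid_symm {V : Type*} {G : SimpleGraph V} {A : Set V} {u w : V}
    (h : reachAvoid G A u w) : reachAvoid G A w u := by
  obtain ⟨p, hp⟩ := h
  exact ⟨p.reverse, by simpa [Walk.support_reverse] using hp⟩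

lemma IsAT_swap23 {V : Type*} {G : SimpleGraph V} {p q r : V} (h : IsAT G p q r) :
    IsAT G p r q := by
  obtain ⟨h1, h2, h3, h4, h5, h6, h7, h8, h9⟩ := h
  exact ⟨h2, h1, fun e => h3 e.symm, h5, h4, fun a => h6 a.symm, h8, h7, reachAvoid_symm h9⟩

lemma IsAT_swap13 {V : Type*} {G : SimpleGraph V} {p q r : V} (h : IsAT G p q r) :
    IsAT G r q p := by
  obtain ⟨h1, h2, h3, h4, h5, h6, h7, h8, h9⟩ := h
  exact ⟨fun e => h3 e.symm, fun e => h2 e.symm, fun e => h1 e.symm,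
    fun a => h6 a.symm, fun a => h5 a.symm, fun a => h4 a.symm,
    reachAvoid_symm h9, reachAvoid_symm h8, reachAvoid_symm h7⟩

def crep {V : Type*} (x y : V) : Option {v : V // v ≠ x ∧ v ≠ y} → V
  | some u => u.1
  | none => x

def okv {V : Type*} (x y : V) (A : Set V) : Option {v : V // v ≠ x ∧ v ≠ y} → Prop
  | some u => u.1 ∉ A
  | none => x ∉ A ∧ y ∉ A

lemma lift_walk {V : Type*} {G : SimpleGraph V} {x y : V} (hxy : G.Adj x y) {A : Set V}
    {a b : Option {v : V // v ≠ x ∧ v ≠ y}} (W : (contractEdge G x y).Walk a b)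
    (hok : ∀ v ∈ W.support, okv x y A v) :
    reachAvoid G A (crep x y a) (crep x y b) := by
  induction W with
  | nil =>
    rename_i c
    have hc : okv x y A c := hok c (by simp)
    match c with
    | some u => exact reachAvoid_refl hc
    | none => exact reachAvoid_refl hc.1
  | cons h' W' ih =>
    rename_i c d e
    have hc : okv x y A c := hok c (by simp)
    have hd : okv x y A d := hok d (by simp [Walk.start_mem_support])
    have tail := ih (fun v hv => hok v (by simp [hv]))
    refine reachAvoid_trans ?_ tail
    match c, d with
    | some u, some w =>
      exact reachAvoid_adj h' hc hd
    | some u, none =>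
      rcases (h' : G.Adj u.1 x ∨ G.Adj u.1 y) with h'' | h''
      · exact reachAvoid_adj h'' hc hd.1
      · exact reachAvoid_trans (reachAvoid_adj h'' hc hd.2)
          (reachAvoid_adj hxy.symm hd.2 hd.1)
    | none, some w =>
      rcases (h' : G.Adj w.1 x ∨ G.Adj w.1 y) with h'' | h''
      · exact reachAvoid_adj h''.symm hc.1 hd
      · exact reachAvoid_trans (reachAvoid_adj hxy hc.1 hc.2)
          (reachAvoid_adj h''.symm hc.2 hd)
    | none, none => exact absurd h' (by simp [contractEdge])

lemma lift_reach {V : Type*} {G : SimpleGraph V} {x y : V} (hxy : G.Adj x y) {A : Set V}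
    {A' : Set (Option {v : V // v ≠ x ∧ v ≠ y})}
    (h : ∀ v, v ∉ A' → okv x y A v)
    {a b : Option {v : V // v ≠ x ∧ v ≠ y}}
    (hr : reachAvoid (contractEdge G x y) A' a b) :
    reachAvoid G A (crep x y a) (crep x y b) := by
  obtain ⟨W, hW⟩ := hr
  exact lift_walk hxy W (fun v hv => h v (hW v hv))

-- okv for the closed nbhd of a `some` vertex
lemma okv_some {V : Type*} {G : SimpleGraph V} {x y : V}
    (r : {v : V // v ≠ x ∧ v ≠ y}) (v : Option {v : V // v ≠ x ∧ v ≠ y})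
    (hv : v ∉ closedNbh (contractEdge G x y) (some r)) :
    okv x y (closedNbh G r.1) v := by
  simp only [closedNbh, Set.mem_insert_iff, mem_neighborSet, not_or] at hv
  match v with
  | some u =>
    simp only [okv, closedNbh, Set.mem_insert_iff, mem_neighborSet, not_or]
    constructor
    · intro e; exact hv.1 (by exact congrArg some (Subtype.ext e))
    · intro a; exact hv.2 (by exact a)
  | none =>
    have hadj : ¬ (G.Adj r.1 x ∨ G.Adj r.1 y) := hv.2
    push_neg at hadj
    refine ⟨?_, ?_⟩ <;>
      simp only [closedNbh, Set.mem_insert_iff, mem_neighborSet, not_or]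
    · exact ⟨fun e => r.2.1 e.symm, hadj.1⟩
    · exact ⟨fun e => r.2.2 e.symm, hadj.2⟩

-- okv for the closed nbhd of `none`, target set N[x]
lemma okv_none {V : Type*} {G : SimpleGraph V} {x y : V}
    (v : Option {v : V // v ≠ x ∧ v ≠ y})
    (hv : v ∉ closedNbh (contractEdge G x y) none) :
    okv x y (closedNbh G x) v := by
  simp only [closedNbh, Set.mem_insert_iff, mem_neighborSet, not_or] at hv
  match v with
  | some u =>
    have hadj : ¬ (G.Adj u.1 x ∨ G.Adj u.1 y) := hv.2
    push_neg at hadj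
    simp only [okv, closedNbh, Set.mem_insert_iff, mem_neighborSet, not_or]
    exact ⟨u.2.1, fun a => hadj.1 a.symm⟩
  | none => exact absurd rfl hv.1

lemma case_all_some {V : Type*} {G : SimpleGraph V} {x y : V} (hxy : G.Adj x y)
    {p q r : {v : V // v ≠ x ∧ v ≠ y}}
    (h : IsAT (contractEdge G x y) (some p) (some q) (some r)) :
    IsAT G p.1 q.1 r.1 := by
  obtain ⟨h1, h2, h3, h4, h5, h6, h7, h8, h9⟩ := h
  refine ⟨fun e => h1 (congrArg some (Subtype.ext e)),
    fun e => h2 (congrArg some (Subtype.ext e)),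
    fun e => h3 (congrArg some (Subtype.ext e)),
    fun a => h4 a, fun a => h5 a, fun a => h6 a,
    lift_reach hxy (okv_some r) h7,
    lift_reach hxy (okv_some q) h8,
    lift_reach hxy (okv_some p) h9⟩

lemma case_none {V : Type*} {G : SimpleGraph V} {x y : V} (hxy : G.Adj x y)
    {p q : {v : V // v ≠ x ∧ v ≠ y}}
    (h : IsAT (contractEdge G x y) (some p) (some q) none) :
    IsAT G p.1 q.1 x := by
  obtain ⟨h1, h2, h3, h4, h5, h6, h7, h8, h9⟩ := h
  have hpx : ¬ (G.Adj p.1 x ∨ G.Adj p.1 y) := h5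
  have hqx : ¬ (G.Adj q.1 x ∨ G.Adj q.1 y) := h6
  push_neg at hpx hqx
  exact ⟨fun e => h1 (congrArg some (Subtype.ext e)), p.2.1, q.2.1,
    fun a => h4 a, hpx.1, hqx.1,
    lift_reach hxy okv_none h7,
    lift_reach hxy (okv_some q) h8,
    lift_reach hxy (okv_some p) h9⟩


/-- the class of AT-free graphs is closed under edge contractions. -/
theorem stmt1 {V : Type*} (G : SimpleGraph V) (x y : V) (hxy : G.Adj x y)
    (hG : ∀ p q r : V, ¬ IsAT G p q r) :
    ∀ p q r, ¬ IsAT (contractEdge G x y) p q r := by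
  intro p q r hAT
  match p, q, r with
  | some p', some q', some r' => exact hG _ _ _ (case_all_some hxy hAT)
  | some p', some q', none => exact hG _ _ _ (case_none hxy hAT)
  | some p', none, some r' => exact hG _ _ _ (case_none hxy (IsAT_swap23 hAT))
  | none, some q', some r' => exact hG _ _ _ (case_none hxy (IsAT_swap13 hAT))
  | none, none, _ => exact hAT.1 rfl
  | none, some _, none => exact hAT.2.1 rfl
  | some _, none, none => exact hAT.2.2.1 rfl
end

section
/- Let G be a connected simple graph, let x be an extreme vertex of G, let C be a largest component of G − N[x], let S = N(C) be the set of vertices outside C with a neighbor in C, and let X = V(G) \ (S ∪ C). Then x ∈ X and every vertex of X is adjacent to every vertex of S. -/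
open SimpleGraph

lemma walk_reachable_induce {V : Type*} {G : SimpleGraph V} {D : Set V} :
    ∀ {a b : V} (p : G.Walk a b), (∀ y ∈ p.support, y ∈ D) →
    ∀ (ha : a ∈ D) (hb : b ∈ D), (G.induce D).Reachable ⟨a, ha⟩ ⟨b, hb⟩ := by
  intro a b p
  induction p with
  | nil => intro _ ha hb; rfl
  | @cons a m b h q ih =>
    intro hsup ha hb
    have hm : m ∈ D := hsup m (by simp)
    have hadj : (G.induce D).Adj ⟨a, ha⟩ ⟨m, hm⟩ := h
    exact hadj.reachable.trans (ih (fun y hy => hsup y (by simp [hy])) hm hb)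

lemma walk_of_induce_reachable {V : Type*} {G : SimpleGraph V} {D : Set V}
    {a b : D} (h : (G.induce D).Reachable a b) :
    ∃ p : G.Walk (a : V) (b : V), ∀ y ∈ p.support, y ∈ D := by
  obtain ⟨q⟩ := h
  refine ⟨q.map (SimpleGraph.Embedding.induce D).toHom, ?_⟩
  intro y hy
  change y ∈ (q.map (SimpleGraph.Embedding.induce D).toHom).support at hy
  rw [SimpleGraph.Walk.support_map, List.mem_map] at hy
  obtain ⟨z, _, rfl⟩ := hy
  exact z.2

/-- if `x` is an extreme vertex of the connected graph `G` (the largest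
component `C` of `G − N[x]` has maximal cardinality among components of `G − N[v]`
over all vertices `v`), `S = N(C)` and `X = V(G) \ (S ∪ C)`, then `x ∈ X` and every
vertex of `X` is adjacent to every vertex of `S`. -/
theorem stmt3 {V : Type*} [Fintype V] (G : SimpleGraph V) (hG : G.Connected) (x : V)
    (C : Set V) (hC : IsBlockAt G x C)
    (hmax : ∀ (v : V) (D : Set V), IsBlockAt G v D → D.ncard ≤ C.ncard)
    (S X : Set V) (hS : S = {u | u ∉ C ∧ ∃ c ∈ C, G.Adj u c})
    (hX : X = (S ∪ C)ᶜ) :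
    x ∈ X ∧ ∀ u ∈ X, ∀ s ∈ S, G.Adj u s := by
  classical
  subst hS hX
  have hxC : x ∉ C := fun hx => hC.2.1 hx (Set.mem_insert _ _)
  have hxS : x ∉ {u | u ∉ C ∧ ∃ c ∈ C, G.Adj u c} := by
    rintro ⟨-, c, hc, hadj⟩
    exact hC.2.1 hc (Set.mem_insert_iff.mpr (Or.inr hadj))
  refine ⟨by simp only [Set.mem_compl_iff, Set.mem_union]; tauto, ?_⟩
  rintro u hu s hs
  by_contra hns
  simp only [Set.mem_compl_iff, Set.mem_union] at hu
  push_neg at hu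
  obtain ⟨huS, huC⟩ := hu
  obtain ⟨hsC, c₀, hc₀, hsadj⟩ := hs
  have hsu : s ≠ u := by
    rintro rfl
    exact huS ⟨hsC, c₀, hc₀, hsadj⟩
  have huadj : ∀ c ∈ C, ¬ G.Adj u c := by
    intro c hc hadj
    exact huS ⟨huC, c, hc, hadj⟩
  set A : Set V := closedNbh G u with hA
  have hsA : s ∉ A := by
    simp only [hA, closedNbh, Set.mem_insert_iff, mem_neighborSet]
    push_neg
    exact ⟨hsu, hns⟩
  have hCA : ∀ c ∈ C, c ∉ A := by
    intro c hc
    simp only [hA, closedNbh, Set.mem_insert_iff, mem_neighborSet]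
    push_neg
    exact ⟨fun h => huC (h ▸ hc), huadj c hc⟩
  set D : Set V := {w | w ∉ A ∧ ∃ p : G.Walk s w, ∀ y ∈ p.support, y ∉ A} with hD
  have hsD : s ∈ D := ⟨hsA, Walk.nil, by simp [hsA]⟩
  have hsub : ∀ {w : V} (p : G.Walk s w), (∀ y ∈ p.support, y ∉ A) →
      ∀ y ∈ p.support, y ∈ D := by
    intro w p hp y hy
    exact ⟨hp y hy, p.takeUntil y hy,
      fun z hz => hp z (Walk.support_takeUntil_subset _ hy hz)⟩
  have hCD : C ⊆ D := by
    intro c hc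
    obtain ⟨q, hq⟩ := walk_of_induce_reachable
      (hC.2.2.1.preconnected ⟨c₀, hc₀⟩ ⟨c, hc⟩)
    refine ⟨hCA c hc, Walk.cons hsadj q, ?_⟩
    intro y hy
    rw [Walk.support_cons, List.mem_cons] at hy
    rcases hy with rfl | hy
    · exact hsA
    · exact hCA y (hq y hy)
  have hblk : IsBlockAt G u D := by
    refine ⟨⟨s, hsD⟩, fun w hw => hw.1, ?_, ?_⟩
    · rw [connected_iff]
      refine ⟨?_, ⟨⟨s, hsD⟩⟩⟩
      rintro ⟨a, haA, pa, hpa⟩ ⟨b, hbA, pb, hpb⟩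
      have := walk_reachable_induce (G := G) (D := D) (pa.reverse.append pb) ?_
        (hsub pa hpa a (Walk.end_mem_support pa))
        (hsub pb hpb b (Walk.end_mem_support pb))
      · exact this
      · intro y hy
        rw [Walk.support_append] at hy
        rcases List.mem_append.mp hy with hy | hy
        · rw [Walk.support_reverse, List.mem_reverse] at hy
          exact hsub pa hpa y hy
        · exact hsub pb hpb y (List.mem_of_mem_tail hy)
    · rintro w hwD hwA c ⟨hcA, pc, hpc⟩ hadj
      refine hwD ⟨hwA, pc.concat hadj.symm, ?_⟩
      intro y hy
      rw [Walk.support_concat, List.mem_append] at hy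
      rcases hy with hy | hy
      · exact hpc y hy
      · simp only [List.mem_singleton] at hy
        exact hy ▸ hwA
  have h1 : (insert s C).ncard ≤ D.ncard :=
    Set.ncard_le_ncard (Set.insert_subset hsD hCD) (Set.toFinite D)
  rw [Set.ncard_insert_of_notMem hsC (Set.toFinite C)] at h1
  have h2 := hmax u D hblk
  omega
end

section
/- Let G be a connected simple graph, x an extreme vertex, C a largest component of G − N[x], S = N(C), and X = V(G) \ (S ∪ C). Then every vertex of X is an extreme vertex of G. -/
open SimpleGraph

lemma induce_reach {V : Type*} (G : SimpleGraph V) (T : Set V) {a b : V}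
    (p : G.Walk a b) (hp : ∀ y ∈ p.support, y ∈ T) (ha : a ∈ T) (hb : b ∈ T) :
    (G.induce T).Reachable ⟨a, ha⟩ ⟨b, hb⟩ := by
  induction p with
  | nil => rfl
  | @cons a c b h q ih =>
    have hc : c ∈ T := hp c (by simp)
    have h1 : (G.induce T).Adj ⟨a, ha⟩ ⟨c, hc⟩ := by simpa using h
    exact h1.reachable.trans (ih (fun y hy => hp y (by simp [hy])) hc hb)

lemma of_induce_walk {V : Type*} (G : SimpleGraph V) (T : Set V) :
    ∀ {a b : T} (_ : (G.induce T).Walk a b),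
      ∃ q : G.Walk a.1 b.1, ∀ y ∈ q.support, y ∈ T := by
  intro a b p
  induction p with
  | nil => exact ⟨Walk.nil, by simpa using a.2⟩
  | @cons a c b h q ih =>
    obtain ⟨q', hq'⟩ := ih
    have h' : G.Adj a.1 c.1 := by simpa using h
    refine ⟨Walk.cons h' q', ?_⟩
    intro y hy
    rcases List.mem_cons.mp (by simpa using hy) with rfl | hy'
    · exact a.2
    · exact hq' y hy'

/-- with `x` extreme, `C` a largest component of `G − N[x]`, `S = N(C)`
and `X = V(G) \ (S ∪ C)`, every vertex of `X` is an extreme vertex of `G`. -/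
theorem stmt4 {V : Type*} [Fintype V] (G : SimpleGraph V) (hG : G.Connected) (x : V)
    (C : Set V) (hC : IsBlockAt G x C)
    (hmax : ∀ (v : V) (D : Set V), IsBlockAt G v D → D.ncard ≤ C.ncard)
    (S X : Set V) (hS : S = {u | u ∉ C ∧ ∃ c ∈ C, G.Adj u c})
    (hX : X = (S ∪ C)ᶜ) :
    ∀ u ∈ X, ∀ (v : V) (D : Set V), IsBlockAt G v D →
      ∃ C' : Set V, IsBlockAt G u C' ∧ D.ncard ≤ C'.ncard := by
  intro u hu v D hD
  classical
  have huX : u ∉ S ∧ u ∉ C := by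
    rw [hX] at hu
    simpa [not_or] using hu
  -- every vertex of C avoids the closed neighborhood of u
  have hCavoid : ∀ c ∈ C, c ∉ closedNbh G u := by
    intro c hc hmem
    rcases Set.mem_insert_iff.mp hmem with rfl | hadj
    · exact huX.2 hc
    · exact huX.1 (hS ▸ ⟨huX.2, c, hc, hadj⟩)
  obtain ⟨c₀, hc₀⟩ := hC.1
  set C' : Set V := {w | ∃ p : G.Walk c₀ w, ∀ y ∈ p.support, y ∉ closedNbh G u} with hC'
  have hc₀' : c₀ ∈ C' := ⟨Walk.nil, by simpa using hCavoid c₀ hc₀⟩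
  -- C' avoids the closed neighborhood of u
  have hC'avoid : ∀ w ∈ C', w ∉ closedNbh G u := by
    rintro w ⟨p, hp⟩
    exact hp w p.end_mem_support
  -- C' is closed under supports of the witnessing walks
  have hsupp : ∀ w (p : G.Walk c₀ w), (∀ y ∈ p.support, y ∉ closedNbh G u) →
      ∀ y ∈ p.support, y ∈ C' := by
    intro w p hp y hy
    exact ⟨p.takeUntil y hy, fun z hz => hp z (p.support_takeUntil_subset hy hz)⟩
  -- C ⊆ C'
  have hCC' : C ⊆ C' := by
    intro c hc
    obtain ⟨q⟩ := hC.2.2.1.preconnected ⟨c₀, hc₀⟩ ⟨c, hc⟩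
    obtain ⟨q', hq'⟩ := of_induce_walk G C q
    exact ⟨q', fun y hy => hCavoid y (hq' y hy)⟩
  refine ⟨C', ⟨⟨c₀, hc₀'⟩, fun w hw => hC'avoid w hw, ?_, ?_⟩, ?_⟩
  · -- connectedness of induce C'
    have hne : Nonempty (C' : Set V) := ⟨⟨c₀, hc₀'⟩⟩
    refine Connected.mk ?_
    rintro ⟨w₁, hw₁⟩ ⟨w₂, hw₂⟩
    obtain ⟨p₁, hp₁⟩ := hw₁
    obtain ⟨p₂, hp₂⟩ := hw₂
    have r₁ := induce_reach G C' p₁ (hsupp w₁ p₁ hp₁) hc₀' (hsupp w₁ p₁ hp₁ w₁ p₁.end_mem_support)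
    have r₂ := induce_reach G C' p₂ (hsupp w₂ p₂ hp₂) hc₀' (hsupp w₂ p₂ hp₂ w₂ p₂.end_mem_support)
    exact r₁.symm.trans r₂
  · -- no edges leave C' except into N[u]
    intro w hw hwn c hc hadj
    obtain ⟨p, hp⟩ := hc
    refine hw ⟨p.concat hadj.symm, ?_⟩
    intro y hy
    rw [Walk.support_concat, List.mem_append] at hy
    rcases hy with hy | hy
    · exact hp y hy
    · rcases List.mem_singleton.mp hy with rfl
      exact hwn
  · exact (hmax v D hD).trans (Set.ncard_le_ncard hCC' (Set.toFinite C'))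
end

section
/- Let G be a connected simple graph, x an extreme vertex, C a largest component of G − N[x], S = N(C), and X = V(G) \ (S ∪ C). Then X is a module of G: every vertex of V(G) \ X is either adjacent to all vertices of X or to no vertex of X. -/
open SimpleGraph

/-- extend reach by a walk avoiding A -/
lemma reachAvoid_trans_s5 {V : Type*} {G : SimpleGraph V} {A : Set V} {a b c : V}
    (h : reachAvoid G A a b) (p : G.Walk b c) (hp : ∀ y ∈ p.support, y ∉ A) :
    reachAvoid G A a c := by
  obtain ⟨q, hq⟩ := h
  refine ⟨q.append p, ?_⟩
  intro y hy
  rw [SimpleGraph.Walk.support_append, List.mem_append] at hy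
  rcases hy with hy | hy
  · exact hq y hy
  · exact hp y (List.mem_of_mem_tail hy)

lemma blockAt_reach {V : Type*} (G : SimpleGraph V) (u v : V)
    (hv : v ∉ closedNbh G u) :
    IsBlockAt G u {w | reachAvoid G (closedNbh G u) v w} := by
  classical
  have hvD : v ∈ {w | reachAvoid G (closedNbh G u) v w} :=
    ⟨Walk.nil, by simpa using hv⟩
  refine ⟨⟨v, hvD⟩, ?_, ?_, ?_⟩
  · rintro w ⟨p, hp⟩
    exact hp w p.end_mem_support
  · apply SimpleGraph.induce_connected_of_patches v hvD
    rintro w ⟨p, hp⟩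
    refine ⟨{y | y ∈ p.support}, ?_, p.start_mem_support, p.end_mem_support, ?_⟩
    · intro y hy
      refine ⟨p.takeUntil y hy, ?_⟩
      intro z hz
      exact hp z (p.support_takeUntil_subset hy hz)
    · exact (p.connected_induce_support).preconnected _ _
  · rintro w hwD hw d ⟨p, hp⟩ hadj
    refine hwD ⟨p.concat hadj.symm, ?_⟩
    intro y hy
    rw [Walk.support_concat, List.mem_append] at hy
    rcases hy with hy | hy
    · exact hp y hy
    · simp at hy; subst hy; exact hw

/-- with `x` extreme, `C` a largest component of `G − N[x]`, `S = N(C)`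
and `X = V(G) \ (S ∪ C)`, the set `X` is a module of `G`: every vertex outside `X`
is adjacent to all vertices of `X` or to none of them. -/
theorem stmt5 {V : Type*} [Fintype V] (G : SimpleGraph V) (hG : G.Connected) (x : V)
    (C : Set V) (hC : IsBlockAt G x C)
    (hmax : ∀ (v : V) (D : Set V), IsBlockAt G v D → D.ncard ≤ C.ncard)
    (S X : Set V) (hS : S = {u | u ∉ C ∧ ∃ c ∈ C, G.Adj u c})
    (hX : X = (S ∪ C)ᶜ) :
    ∀ v ∉ X, (∀ u ∈ X, G.Adj v u) ∨ (∀ u ∈ X, ¬ G.Adj v u) := by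
  classical
  have hXmem : ∀ u ∈ X, u ∉ C ∧ ∀ c ∈ C, ¬ G.Adj u c := by
    intro u hu
    rw [hX, Set.mem_compl_iff, Set.mem_union] at hu
    push_neg at hu
    obtain ⟨huS, huC⟩ := hu
    refine ⟨huC, fun c hc hadj => huS ?_⟩
    rw [hS]; exact ⟨huC, c, hc, hadj⟩
  intro v hv
  rw [hX, Set.notMem_compl_iff, Set.mem_union] at hv
  rcases hv with hvS | hvC
  · left
    intro u hu
    by_contra hadj
    obtain ⟨huC, huAdjC⟩ := hXmem u hu
    rw [hS, Set.mem_setOf_eq] at hvS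
    obtain ⟨hvC, c0, hc0, hvc0⟩ := hvS
    -- no vertex of C is in the closed neighborhood of u
    have hCnbh : ∀ c ∈ C, c ∉ closedNbh G u := by
      intro c hc h
      rcases h with h | h
      · exact huC (h ▸ hc)
      · exact huAdjC c hc h
    have hvu : v ∉ closedNbh G u := by
      intro h
      rcases h with h | h
      · subst h; exact huAdjC c0 hc0 hvc0
      · exact hadj h.symm
    set D : Set V := {w | reachAvoid G (closedNbh G u) v w} with hD
    have hblock : IsBlockAt G u D := blockAt_reach G u v hvu
    have hvD : v ∈ D := ⟨Walk.nil, by simpa using hvu⟩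
    have hc0D : reachAvoid G (closedNbh G u) v c0 := by
      refine ⟨Walk.cons hvc0 Walk.nil, ?_⟩
      intro y hy
      simp only [Walk.support_cons, Walk.support_nil, List.mem_cons,
        List.mem_singleton, List.not_mem_nil, or_false] at hy
      rcases hy with rfl | rfl
      · exact hvu
      · exact hCnbh _ hc0
    have hCD : C ⊆ D := by
      intro c hc
      obtain ⟨q⟩ := (hC.2.2.1).preconnected ⟨c0, hc0⟩ ⟨c, hc⟩
      refine reachAvoid_trans_s5 hc0D (q.map (Embedding.induce C).toHom) ?_
      intro y hy
      erw [Walk.support_map, List.mem_map] at hy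
      obtain ⟨⟨z, hz⟩, _, rfl⟩ := hy
      exact hCnbh z hz
    have hsub : insert v C ⊆ D := Set.insert_subset hvD hCD
    have h1 : (insert v C).ncard ≤ D.ncard := Set.ncard_le_ncard hsub (Set.toFinite D)
    have h2 : (insert v C).ncard = C.ncard + 1 := Set.ncard_insert_of_notMem hvC (Set.toFinite C)
    have h3 := hmax u D hblock
    omega
  · right
    intro u hu hadj
    exact (hXmem u hu).2 v hvC hadj.symm
end

section
/- Every cocomparability graph is AT-free: if G is a simple graph whose vertices can be represented by continuous functions f_v : [0,1] → ℝ such that u and v are adjacent if and only if u ≠ v and the functions f_u and f_v intersect (there exists t with f_u(t) = f_v(t)), then G contains no asteroidal triple. -/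
open SimpleGraph

/-- A continuous function on the unit interval that never vanishes has constant sign. -/
lemma sign_dichotomy (g : unitInterval → ℝ) (hg : Continuous g)
    (h : ∀ t, g t ≠ 0) : (∀ t, g t < 0) ∨ (∀ t, g t > 0) := by
  by_contra hc
  push_neg at hc
  obtain ⟨⟨t0, ht0⟩, ⟨t1, ht1⟩⟩ := hc
  have h0 : (0:ℝ) ∈ Set.Icc (g t1) (g t0) := ⟨ht1, ht0⟩
  have := intermediate_value_univ t1 t0 hg h0
  obtain ⟨t, ht⟩ := this
  exact h t ht

section
variable {V : Type*} (G : SimpleGraph V) (f : V → unitInterval → ℝ)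
    (hcont : ∀ v : V, Continuous (f v))
    (hadj : ∀ u v : V, G.Adj u v ↔ u ≠ v ∧ ∃ t : unitInterval, f u t = f v t)

include hcont hadj in
/-- If a vertex avoids `N[m]`, its function has constant sign relative to `f m`. -/
lemma avoid_sign (m x : V) (hx : x ∉ closedNbh G m) :
    (∀ t, f x t < f m t) ∨ (∀ t, f m t < f x t) := by
  have hne : x ≠ m := fun h => hx (by simp [closedNbh, h])
  have hnadj : ¬ G.Adj m x := fun h => hx (by simp [closedNbh, neighborSet, h])
  have hno : ∀ t, f x t - f m t ≠ 0 := by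
    intro t h
    exact hnadj ((hadj m x).2 ⟨hne.symm, ⟨t, by linarith [sub_eq_zero.mp h]⟩⟩)
  rcases sign_dichotomy _ ((hcont x).sub (hcont m)) hno with h | h
  · exact Or.inl (fun t => by linarith [h t, Pi.sub_apply (f x) (f m) t])
  · exact Or.inr (fun t => by linarith [h t, Pi.sub_apply (f x) (f m) t])

include hcont hadj in
lemma walk_below (m : V) : ∀ {a b : V} (p : G.Walk a b),
    (∀ x ∈ p.support, x ∉ closedNbh G m) → (∀ t, f a t < f m t) → ∀ t, f b t < f m t := by
  intro a b p
  induction p with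
  | nil => exact fun _ h => h
  | @cons u v w huv p ih =>
    intro hsup ha
    have hv : v ∉ closedNbh G m := hsup v (by simp)
    rcases avoid_sign G f hcont hadj m v hv with hlt | hgt
    · exact ih (fun x hx => hsup x (by simp [hx])) hlt
    · exfalso
      obtain ⟨_, t, ht⟩ := (hadj u v).1 huv
      have := ha t
      have := hgt t
      linarith
  
include hcont hadj in
lemma no_reach_between (m a b : V)
    (ha : ∀ t, f a t < f m t) (hb : ∀ t, f m t < f b t)
    (hr : reachAvoid G (closedNbh G m) a b) : False := by
  obtain ⟨p, hp⟩ := hr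
  have := walk_below G f hcont hadj m p hp ha 0
  linarith [hb 0]

end

/-- every cocomparability graph (a graph with a continuous function
intersection model on `[0,1]`) is AT-free. -/
theorem stmt7 {V : Type*} (G : SimpleGraph V) (f : V → unitInterval → ℝ)
    (hcont : ∀ v : V, Continuous (f v))
    (hadj : ∀ u v : V, G.Adj u v ↔ u ≠ v ∧ ∃ t : unitInterval, f u t = f v t) :
    ∀ p q r : V, ¬ IsAT G p q r := by
  intro p q r hAT
  obtain ⟨hpq, hpr, hqr, hnpq, hnpr, hnqr, hRpq, hRpr, hRqr⟩ := hAT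
  have sign : ∀ x y : V, x ≠ y → ¬ G.Adj x y →
      (∀ t, f x t < f y t) ∨ (∀ t, f y t < f x t) := by
    intro x y hne hna
    have hno : ∀ t, f x t - f y t ≠ 0 := by
      intro t h
      exact hna ((hadj x y).2 ⟨hne, ⟨t, by linarith [sub_eq_zero.mp h]⟩⟩)
    rcases sign_dichotomy _ ((hcont x).sub (hcont y)) hno with h | h
    · exact Or.inl (fun t => by linarith [h t, Pi.sub_apply (f x) (f y) t])
    · exact Or.inr (fun t => by linarith [h t, Pi.sub_apply (f x) (f y) t])
  rcases sign p q hpq hnpq with h1 | h1 <;>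
  rcases sign p r hpr hnpr with h2 | h2 <;>
  rcases sign q r hqr hnqr with h3 | h3
  · -- p<q, p<r, q<r : middle q
    exact no_reach_between G f hcont hadj q p r h1 h3 hRpr
  · -- p<q, p<r, r<q : middle r
    exact no_reach_between G f hcont hadj r p q h2 h3 hRpq
  · -- p<q, r<p, q<r : impossible
    exact absurd (h1 0) (by linarith [h2 0, h3 0])
  · -- p<q, r<p, r<q : order r<p<q, middle p
    exact no_reach_between G f hcont hadj p r q h2 h1 (reachAvoid_symm hRqr)
  · -- q<p, p<r, q<r : q<p<r middle p
    exact no_reach_between G f hcont hadj p q r h1 h2 hRqr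
  · -- q<p, p<r, r<q : impossible
    exact absurd (h1 0) (by linarith [h2 0, h3 0])
  · -- q<p, r<p, q<r : q<r<p middle r
    exact no_reach_between G f hcont hadj r q p h3 h2 (reachAvoid_symm hRpq)
  · -- q<p, r<p, r<q : middle q
    exact no_reach_between G f hcont hadj q r p h3 h1 (reachAvoid_symm hRpr)
end

section
/- Let G be a simple graph, x a vertex, and B a connected component of G − N[x] (a block at x). For any vertex y ∈ B and any vertex z ∈ B \ N[y], either z lies in the interval I(x,y), or z lies in a connected component of G − N[y] that is entirely contained in B (a block at y contained in B). -/
open SimpleGraph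

lemma reach_induce_of_walk {V : Type*} {G : SimpleGraph V} {s : Set V} :
    ∀ {u w : V} (p : G.Walk u w), (∀ v ∈ p.support, v ∈ s) →
    ∀ (hu : u ∈ s) (hw : w ∈ s), (G.induce s).Reachable ⟨u, hu⟩ ⟨w, hw⟩ := by
  intro u w p
  induction p with
  | nil => intro _ hu hw; exact Reachable.refl _
  | @cons u a w h q ih =>
    intro hs hu hw
    have ha : a ∈ s := hs a (by simp)
    exact (SimpleGraph.Adj.reachable
      (show (G.induce s).Adj ⟨u, hu⟩ ⟨a, ha⟩ from h)).trans
      (ih (fun v hv => hs v (by simp [hv])) ha hw)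

/-- escape lemma -/
lemma escape {V : Type*} {G : SimpleGraph V} {x y : V} {B : Set V}
    (hmax : ∀ u ∉ B, u ∉ closedNbh G x → ∀ c ∈ B, ¬ G.Adj u c)
    (hxy : x ∉ closedNbh G y) :
    ∀ {u w : V} (p : G.Walk u w), (∀ v ∈ p.support, v ∉ closedNbh G y) →
      u ∈ B → (∀ v ∈ p.support, v ∈ B) ∨ reachAvoid G (closedNbh G y) u x := by
  intro u w p
  induction p with
  | nil =>
    intro _ hu
    left; intro v hv
    simp only [SimpleGraph.Walk.support_nil, List.mem_singleton] at hv
    subst hv; exact hu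
  | @cons u a w h q ih =>
    intro hs hu
    have hus : u ∉ closedNbh G y := hs u (by simp)
    by_cases ha : a ∈ B
    · rcases ih (fun v hv => hs v (by simp [hv])) ha with hall | ⟨r, hr⟩
      · left; intro v hv
        simp only [SimpleGraph.Walk.support_cons, List.mem_cons] at hv
        rcases hv with rfl | hv
        · exact hu
        · exact hall v hv
      · right
        exact ⟨SimpleGraph.Walk.cons h r, by
          intro v hv
          simp only [SimpleGraph.Walk.support_cons, List.mem_cons] at hv
          rcases hv with rfl | hv
          · exact hus
          · exact hr v hv⟩
    · -- a ∉ B, adjacent to u ∈ B, so a ∈ closedNbh x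
      have hax : a ∈ closedNbh G x := by
        by_contra hax
        exact hmax a ha hax u hu (h.symm)
      have has : a ∉ closedNbh G y := hs a (by simp)
      right
      rcases hax with rfl | hadj
      · exact ⟨SimpleGraph.Walk.cons h SimpleGraph.Walk.nil, by
          intro v hv
          simp only [SimpleGraph.Walk.support_cons, SimpleGraph.Walk.support_nil,
            List.mem_cons, List.mem_singleton, List.not_mem_nil, or_false] at hv
          rcases hv with rfl | rfl
          · exact hus
          · exact has⟩
      · have hadj' : G.Adj a x := (SimpleGraph.mem_neighborSet G x a).mp hadj |>.symm
        exact ⟨SimpleGraph.Walk.cons h (SimpleGraph.Walk.cons hadj' SimpleGraph.Walk.nil), by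
          intro v hv
          simp only [SimpleGraph.Walk.support_cons, SimpleGraph.Walk.support_nil,
            List.mem_cons, List.mem_singleton, List.not_mem_nil, or_false] at hv
          rcases hv with rfl | rfl | rfl
          · exact hus
          · exact has
          · exact hxy⟩

/-- if `B` is a block at `x`, `y ∈ B` and `z ∈ B \ N[y]`, then `z` lies
in the interval `I(x,y)`, or `z` lies in a block at `y` entirely contained in `B`. -/
theorem stmt10 {V : Type*} (G : SimpleGraph V) (x : V) (B : Set V)
    (hB : IsBlockAt G x B) (y : V) (hy : y ∈ B) (z : V) (hz : z ∈ B)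
    (hzy : z ∉ closedNbh G y) :
    z ∈ interval G x y ∨ ∃ D : Set V, IsBlockAt G y D ∧ z ∈ D ∧ D ⊆ B := by
  classical
  obtain ⟨hBne, hBsub, hBconn, hBmax⟩ := hB
  have hyx : y ∉ closedNbh G x := hBsub hy
  have hxy : x ∉ closedNbh G y := by
    simp only [closedNbh, Set.mem_insert_iff, SimpleGraph.mem_neighborSet] at hyx ⊢
    push_neg at hyx ⊢
    exact ⟨fun h => hyx.1 h.symm, fun h => hyx.2 h.symm⟩
  -- second half of betweenness: y and z connected in B avoiding N[x]
  have hreach2 : reachAvoid G (closedNbh G x) y z := by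
    obtain ⟨q⟩ := hBconn.preconnected ⟨y, hy⟩ ⟨z, hz⟩
    refine ⟨q.map (SimpleGraph.Embedding.induce B).toHom, ?_⟩
    intro v hv
    erw [SimpleGraph.Walk.support_map, List.mem_map] at hv
    obtain ⟨⟨v', hv'⟩, _, rfl⟩ := hv
    exact hBsub hv'
  set D : Set V := {w | reachAvoid G (closedNbh G y) z w} with hD
  have hzD : z ∈ D := ⟨SimpleGraph.Walk.nil, by
    intro v hv
    simp only [SimpleGraph.Walk.support_nil, List.mem_singleton] at hv
    subst hv; exact hzy⟩
  -- D is closed under walk supports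
  have hDsupp : ∀ {w : V}, ∀ p : G.Walk z w, (∀ v ∈ p.support, v ∉ closedNbh G y) →
      ∀ v ∈ p.support, v ∈ D := by
    intro w p hp v hv
    exact ⟨p.takeUntil v hv, fun u hu => hp u (SimpleGraph.Walk.support_takeUntil_subset p hv hu)⟩
  by_cases hDB : D ⊆ B
  · right
    refine ⟨D, ⟨⟨z, hzD⟩, ?_, ?_, ?_⟩, hzD, hDB⟩
    · rintro w ⟨p, hp⟩
      exact hp w p.end_mem_support
    · have : Nonempty D := ⟨⟨z, hzD⟩⟩
      refine SimpleGraph.Connected.mk ?_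
      rintro ⟨a, pa, hpa⟩ ⟨b, pb, hpb⟩
      have h1 := reach_induce_of_walk (s := D) pa (hDsupp pa hpa) hzD ⟨pa, hpa⟩
      have h2 := reach_induce_of_walk (s := D) pb (hDsupp pb hpb) hzD ⟨pb, hpb⟩
      exact h1.symm.trans h2
    · rintro u hu huy c ⟨p, hp⟩ hadj
      refine hu ⟨p.concat hadj.symm, ?_⟩
      intro v hv
      rw [SimpleGraph.Walk.support_concat, List.mem_append,
        List.mem_singleton] at hv
      rcases hv with hv | rfl
      · exact hp v hv
      · exact huy
  · left
    rw [Set.not_subset] at hDB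
    obtain ⟨w, ⟨p, hp⟩, hwB⟩ := hDB
    rcases escape hBmax hxy p hp hz with hall | ⟨r, hr⟩
    · exact absurd (hall w p.end_mem_support) hwB
    · exact ⟨⟨r.reverse, by
        intro v hv
        rw [SimpleGraph.Walk.support_reverse, List.mem_reverse] at hv
        exact hr v hv⟩, hreach2⟩
end
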